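/- A small constellation P is normal and right cancellative if and only if it embeds (via a strong injective radiant) in the constellation I_P of injective partial functions on the set P, where s·t is the composite (first s, then t) defined exactly when Im(s) ⊆ Dom(t), and D(s) is the identity restricted to Dom(s). -/

import Mathlib

open scoped Classical

/-- A constellation: a partial binary operation (encoded via `Option`) together with a
domain operation `D`, satisfying (Const1), (Const2) and (Const3). -/
structure Constellation (Q : Type*) where
  mul : Q → Q → Option Q
  D : Q → Q
  const1 : ∀ x y z w v, mul y z = some w → mul x w = some v →
    ∃ u, mul x y = some u ∧ mul u z = some v
  const2 : ∀ x y z u v, mul x y = some u → mul y z = some v → (mul x v).isSome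
  D_mul : ∀ x, mul (D x) x = some x
  D_ri : ∀ x s t, mul s (D x) = some t → t = s
  D_unique : ∀ x e, (∀ s t, mul s e = some t → t = s) → mul e x = some x → e = D x

namespace Constellation
variable {Q : Type*} (C : Constellation Q)

/-- `e` is a projection, i.e. an element of `D(Q)`. -/
def IsProj (e : Q) : Prop := ∃ s, e = C.D s

/-- `e` is a right identity. -/
def IsRightId (e : Q) : Prop := ∀ s t, C.mul s e = some t → t = s

/-- `e` is an idempotent. -/
def Idem (e : Q) : Prop := C.mul e e = some e

/-- D-regularity: every `a` has some `b` with `a·b = D(a)`. -/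
def DRegular : Prop := ∀ a, ∃ b, C.mul a b = some (C.D a)

/-- Normality: projections `e`, `f` with `e·f` and `f·e` both existing are equal. -/
def Normal : Prop := ∀ e f, C.IsProj e → C.IsProj f →
  (C.mul e f).isSome → (C.mul f e).isSome → e = f

/-- `t` is a D-inverse of `s`. -/
def IsDInv (s t : Q) : Prop := C.mul s t = some (C.D s) ∧ C.mul t s = some (C.D t)

/-- A D-inverse constellation: every element has a unique D-inverse. -/
def DInverse : Prop := ∀ s, ∃! t, C.IsDInv s t

/-- Right cancellativity. -/
def RightCancellative : Prop := ∀ a b c x, C.mul a c = some x → C.mul b c = some x → a = b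

end Constellation

/-- Injective partial functions on `X` (the carrier of the constellation `I_X`). -/
def PInj (X : Type*) := {f : X → Option X // ∀ a b c, f a = some c → f b = some c → a = b}

/-- The product in `I_X`: `s·t` is the composite (first `s`, then `t`), defined exactly
when the image of `s` is contained in the domain of `t`. -/
noncomputable def PInj.mul {X : Type*} (s t : PInj X) : Option (PInj X) :=
  if h : ∀ a y, s.1 a = some y → (t.1 y).isSome
  then some ⟨fun a => (s.1 a).bind t.1, by
    intro a b c hac hbc
    rcases Option.bind_eq_some_iff.mp hac with ⟨y1, hy1, hy1'⟩
    rcases Option.bind_eq_some_iff.mp hbc with ⟨y2, hy2, hy2'⟩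
    have hy : y1 = y2 := t.2 _ _ _ hy1' hy2'
    subst hy
    exact s.2 _ _ _ hy1 hy2⟩
  else none

/-- The domain operation in `I_X`: the identity map restricted to the domain of `s`. -/
noncomputable def PInj.D {X : Type*} (s : PInj X) : PInj X :=
  ⟨fun a => if (s.1 a).isSome then some a else none, by
    intro a b c ha hb
    have h1 : a = c := by
      by_cases h : (s.1 a).isSome <;> simp [h] at ha
      exact ha
    have h2 : b = c := by
      by_cases h : (s.1 b).isSome <;> simp [h] at hb
      exact hb
    exact h1.trans h2.symm⟩

/-- The inverse of an injective partial function, as an injective partial function. -/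
noncomputable def PInj.inv {X : Type*} (s : PInj X) : PInj X :=
  ⟨fun y => if h : ∃ a, s.1 a = some y then some h.choose else none, by
    intro a b c ha hb
    have h1 : s.1 c = some a := by
      by_cases h : ∃ x, s.1 x = some a
      · simp [h] at ha; rw [← ha]; exact h.choose_spec
      · simp [h] at ha
    have h2 : s.1 c = some b := by
      by_cases h : ∃ x, s.1 x = some b
      · simp [h] at hb; rw [← hb]; exact h.choose_spec
      · simp [h] at hb
    rw [h1] at h2; exact Option.some_injective _ h2⟩

section Aux
variable {Q : Type*} (C : Constellation Q)

/-- If `a·s = y` and `s·t = u`, then `a·u` and `y·t` both exist and are equal. -/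
lemma Constellation.assoc_ex {a s t y u : Q} (h1 : C.mul a s = some y)
    (h2 : C.mul s t = some u) : ∃ w, C.mul a u = some w ∧ C.mul y t = some w := by
  have hs := C.const2 a s t y u h1 h2
  rcases Option.isSome_iff_exists.mp hs with ⟨w, hw⟩
  rcases C.const1 a s t u w h2 hw with ⟨u', hu1, hu2⟩
  rw [h1] at hu1
  exact ⟨w, hw, by rwa [Option.some.inj hu1]⟩

/-- If `a·s` exists then `a·D(s) = a`. -/
lemma Constellation.mul_D_of_mul {a s y : Q} (h : C.mul a s = some y) :
    C.mul a (C.D s) = some a := by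
  rcases C.const1 a (C.D s) s s y (C.D_mul s) h with ⟨u, hu1, hu2⟩
  have := C.D_ri s a u hu1
  rwa [this] at hu1

/-- If `a·D(s) = a` then `a·s` exists. -/
lemma Constellation.mul_of_mul_D {a s : Q} (h : C.mul a (C.D s) = some a) :
    (C.mul a s).isSome :=
  C.const2 a (C.D s) s a s h (C.D_mul s)

end Aux

/-- A small constellation is normal and right cancellative iff it embeds (via a strong
injective radiant) in the constellation `I_P` of injective partial functions on `P`. -/
theorem normal_rightCancellative_iff_embeds_in_IP {P : Type*} (C : Constellation P) :
    (C.Normal ∧ C.RightCancellative) ↔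
    ∃ ρ : P → PInj P, Function.Injective ρ ∧
      (∀ s t u, C.mul s t = some u → PInj.mul (ρ s) (ρ t) = some (ρ u)) ∧
      (∀ s, PInj.D (ρ s) = ρ (C.D s)) ∧
      (∀ s t, (PInj.mul (ρ s) (ρ t)).isSome → (C.mul s t).isSome) := by
  constructor
  · rintro ⟨hnorm, hrc⟩
    refine ⟨fun s => ⟨fun a => C.mul a s, fun a b c hac hbc => hrc a b s c hac hbc⟩,
      ?_, ?_, ?_, ?_⟩
    · -- injectivity
      intro s t hst
      have hval : (fun a => C.mul a s) = (fun a => C.mul a t) :=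
        congrArg Subtype.val hst
      have hst' : ∀ a, C.mul a s = C.mul a t := fun a => congrFun hval a
      -- D(s)·t = s and D(t)·s = t
      have h1 : C.mul (C.D s) t = some s := by rw [← hst' (C.D s)]; exact C.D_mul s
      have h2 : C.mul (C.D t) s = some t := by rw [hst' (C.D t)]; exact C.D_mul t
      -- D(s)·D(t) exists
      rcases C.const1 (C.D s) (C.D t) s t s h2 h1 with ⟨u1, hu1, -⟩
      rcases C.const1 (C.D t) (C.D s) t s t h1 h2 with ⟨u2, hu2, -⟩
      have hDeq : C.D s = C.D t :=
        hnorm (C.D s) (C.D t) ⟨s, rfl⟩ ⟨t, rfl⟩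
          (by rw [hu1]; rfl) (by rw [hu2]; rfl)
      have : some s = some t := by rw [← h1, hDeq]; exact C.D_mul t
      exact Option.some.inj this
    · -- radiant (homomorphism)
      intro s t u hst
      have hcond : ∀ a y, C.mul a s = some y → (C.mul y t).isSome := by
        intro a y hay
        rcases C.assoc_ex hay hst with ⟨w, -, hw2⟩
        rw [hw2]; rfl
      unfold PInj.mul; rw [dif_pos hcond]
      congr 1
      apply Subtype.ext
      funext a
      show (C.mul a s).bind (fun y => C.mul y t) = C.mul a u
      cases has : C.mul a s with
      | none =>
        simp only [Option.bind_none]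
        by_contra h
        rcases Option.ne_none_iff_exists'.mp (Ne.symm h) with ⟨w, hw⟩
        rcases C.const1 a s t u w hst hw with ⟨y, hy, -⟩
        rw [has] at hy; cases hy
      | some y =>
        rcases C.assoc_ex has hst with ⟨w, hw1, hw2⟩
        simp [hw1, hw2]
    · -- D compatibility
      intro s
      apply Subtype.ext
      funext a
      show (if (C.mul a s).isSome then some a else none) = C.mul a (C.D s)
      cases has : C.mul a s with
      | none =>
        simp only [has, Option.isSome_none, Bool.false_eq_true, if_false]
        by_contra h
        rcases Option.ne_none_iff_exists'.mp (Ne.symm h) with ⟨w, hw⟩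
        have hwa := C.D_ri s a w hw
        subst hwa
        have := C.mul_of_mul_D hw
        rw [has] at this; simp at this
      | some y =>
        simp only [has, Option.isSome_some, if_true]
        exact (C.mul_D_of_mul has).symm
    · -- strong
      intro s t h
      unfold PInj.mul at h
      by_cases hcond : ∀ a y, C.mul a s = some y → (C.mul y t).isSome
      · exact hcond (C.D s) s (C.D_mul s)
      · rw [dif_neg hcond] at h; simp at h
  · rintro ⟨ρ, hinj, hhom, hD, -⟩
    have getcond : ∀ s t u, PInj.mul (ρ s) (ρ t) = some u →
        ∀ a y, (ρ s).1 a = some y → ((ρ t).1 y).isSome := by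
      intro s t u h
      by_cases hc : ∀ a y, (ρ s).1 a = some y → ((ρ t).1 y).isSome
      · exact hc
      · rw [PInj.mul, dif_neg hc] at h; cases h
    constructor
    · -- Normal
      intro e f ⟨s, hes⟩ ⟨t, hft⟩ hef hfe
      have hDe : (ρ e).1 = fun a => if ((ρ s).1 a).isSome then some a else none := by
        rw [hes, ← hD s]; rfl
      have hDf : (ρ f).1 = fun a => if ((ρ t).1 a).isSome then some a else none := by
        rw [hft, ← hD t]; rfl
      rcases Option.isSome_iff_exists.mp hef with ⟨w1, hw1⟩
      rcases Option.isSome_iff_exists.mp hfe with ⟨w2, hw2⟩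
      have hc1 := getcond e f (ρ w1) (hhom e f w1 hw1)
      have hc2 := getcond f e (ρ w2) (hhom f e w2 hw2)
      have hdom : ∀ a, ((ρ s).1 a).isSome ↔ ((ρ t).1 a).isSome := by
        intro a
        constructor
        · intro ha
          have := hc1 a a (by rw [hDe]; simp [ha])
          rw [hDf] at this
          by_cases hb : ((ρ t).1 a).isSome
          · exact hb
          · simp [hb] at this
        · intro ha
          have := hc2 a a (by rw [hDf]; simp [ha])
          rw [hDe] at this
          by_cases hb : ((ρ s).1 a).isSome
          · exact hb
          · simp [hb] at this
      have : ρ e = ρ f := by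
        apply Subtype.ext
        rw [hDe, hDf]
        funext a
        by_cases ha : ((ρ s).1 a).isSome
        · simp [ha, (hdom a).mp ha]
        · have : ¬ ((ρ t).1 a).isSome := fun hb => ha ((hdom a).mpr hb)
          simp [ha, this]
      exact hinj this
    · -- Right cancellative
      intro a b c x hax hbx
      have ha := hhom a c x hax
      have hb := hhom b c x hbx
      have hca := getcond a c (ρ x) ha
      have hcb := getcond b c (ρ x) hb
      have hva : (fun z => ((ρ a).1 z).bind (ρ c).1) = (ρ x).1 := by
        rw [PInj.mul, dif_pos hca] at ha
        exact congrArg Subtype.val (Option.some.inj ha)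
      have hvb : (fun z => ((ρ b).1 z).bind (ρ c).1) = (ρ x).1 := by
        rw [PInj.mul, dif_pos hcb] at hb
        exact congrArg Subtype.val (Option.some.inj hb)
      have heq : ∀ z, ((ρ a).1 z).bind (ρ c).1 = ((ρ b).1 z).bind (ρ c).1 := by
        intro z; rw [congrFun hva z, congrFun hvb z]
      have : ρ a = ρ b := by
        apply Subtype.ext
        funext z
        have hz := heq z
        cases h1 : (ρ a).1 z with
        | none =>
          cases h2 : (ρ b).1 z with
          | none => rfl
          | some y2 =>
            rw [h1, h2] at hz
            rcases Option.isSome_iff_exists.mp (hcb z y2 h2) with ⟨w, hw⟩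
            simp [hw] at hz
        | some y1 =>
          cases h2 : (ρ b).1 z with
          | none =>
            rw [h1, h2] at hz
            rcases Option.isSome_iff_exists.mp (hca z y1 h1) with ⟨w, hw⟩
            simp [hw] at hz
          | some y2 =>
            rw [h1, h2] at hz
            simp only [Option.bind_some] at hz
            rcases Option.isSome_iff_exists.mp (hca z y1 h1) with ⟨w, hw⟩
            rw [(ρ c).2 y1 y2 w hw (by rw [← hz]; exact hw)]
      exact hinj this
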